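/- Let X be a measurable space, λ a σ-finite measure on X, and h, q : X → [0,∞) measurable with γ := λ.withDensity h a finite measure, γ(X) > 0, and h(x) = 0 for λ-almost every x with q(x) = 0. Let {A_i}_{i∈I} be a finite measurable partition of X with ω_i^q := ∫_{A_i} q dλ ∈ (0,∞) for each i, let d_i := q·1_{A_i}/ω_i^q, and let Q_i := λ.withDensity d_i (a probability measure). On a common probability space, for each i ∈ I let (x_i^n)_{n≥1} be an i.i.d. sequence with law Q_i, with the sequences independent across i. Let f : X → ℝ be bounded measurable, define the weight function w_i(x) := h(x)/d_i(x) (with the convention 0 where d_i = 0), and assume w_i(x_i^1) is integrable for each i. Then, almost surely, as N → ∞, ( Σ_{i∈I} (1/N) Σ_{n=1}^N w_i(x_i^n)·f(x_i^n) ) / ( Σ_{i∈I} (1/N) Σ_{n=1}^N w_i(x_i^n) ) converges to ( ∫_X f h dλ ) / ( ∫_X h dλ ). -/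

import Mathlib

open MeasureTheory ProbabilityTheory Filter Topology
open scoped NNReal ENNReal

theorem stratified_self_normalized_importance_sampling_consistency
    {X : Type*} [MeasurableSpace X]
    (lam : Measure X) [SigmaFinite lam]
    (h q : X → ℝ≥0) (hh : Measurable h) (hq : Measurable q)
    (γ : Measure X) (hγdef : γ = lam.withDensity fun x => (h x : ℝ≥0∞))
    [IsFiniteMeasure γ] (hγpos : 0 < γ Set.univ)
    (hzero : ∀ᵐ x ∂lam, q x = 0 → h x = 0)
    {ι : Type*} [Fintype ι]
    (A : ι → Set X) (hA : ∀ i, MeasurableSet (A i))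
    (hdisj : Pairwise fun i j => Disjoint (A i) (A j))
    (hcover : (⋃ i, A i) = Set.univ)
    (ω : ι → ℝ≥0) (hωpos : ∀ i, 0 < ω i)
    (hωdef : ∀ i, ∫⁻ x in A i, (q x : ℝ≥0∞) ∂lam = (ω i : ℝ≥0∞))
    (d : ι → X → ℝ≥0) (hd : ∀ i x, d i x = Set.indicator (A i) q x / ω i)
    (Q : ι → Measure X) (hQ : ∀ i, Q i = lam.withDensity fun x => (d i x : ℝ≥0∞))
    (hQprob : ∀ i, IsProbabilityMeasure (Q i))
    {Ω : Type*} [MeasureSpace Ω] [IsProbabilityMeasure (ℙ : Measure Ω)]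
    (x : ι → ℕ → Ω → X) (hxm : ∀ i n, Measurable (x i n))
    (hlaw : ∀ i n, Measure.map (x i n) ℙ = Q i)
    (hindep : iIndepFun (fun p : ι × ℕ => x p.1 p.2) ℙ)
    (f : X → ℝ) (hf : Measurable f) (hfb : ∃ C : ℝ, ∀ y, |f y| ≤ C)
    (w : ι → X → ℝ≥0) (hw : ∀ i y, w i y = h y / d i y)
    (hint : ∀ i, Integrable (fun ωo => (w i (x i 0 ωo) : ℝ)) ℙ) :
    ∀ᵐ ωo ∂ℙ, Tendsto (fun N : ℕ =>
        (∑ i, (N : ℝ)⁻¹ * ∑ n ∈ Finset.range N, (w i (x i n ωo) : ℝ) * f (x i n ωo)) /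
          (∑ i, (N : ℝ)⁻¹ * ∑ n ∈ Finset.range N, (w i (x i n ωo) : ℝ)))
      atTop (𝓝 ((∫ y, f y * (h y : ℝ) ∂lam) / ∫ y, (h y : ℝ) ∂lam)) := by
  obtain ⟨C, hC⟩ := hfb
  -- basic measurability
  have hdm : ∀ i, Measurable (d i) := by
    intro i
    have : d i = fun y => Set.indicator (A i) q y / ω i := funext (hd i)
    rw [this]
    exact (hq.indicator (hA i)).div_const _
  have hwm : ∀ i, Measurable (w i) := by
    intro i
    have : w i = fun y => h y / d i y := funext (hw i)
    rw [this]
    exact hh.div (hdm i)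
  -- integrability of h
  have hlt : ∫⁻ y, (h y : ℝ≥0∞) ∂lam < ∞ := by
    have := measure_lt_top γ Set.univ
    rwa [hγdef, withDensity_apply _ MeasurableSet.univ, Measure.restrict_univ] at this
  have hInt_h : Integrable (fun y => (h y : ℝ)) lam := by
    refine ⟨hh.coe_nnreal_real.aestronglyMeasurable, ?_⟩
    simpa [HasFiniteIntegral] using hlt
  have hIntfh : Integrable (fun y => f y * (h y : ℝ)) lam :=
    hInt_h.bdd_mul hf.aestronglyMeasurable (c := C) (ae_of_all _ fun y => by simpa using hC y)
  -- positivity of ∫ h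
  have hpos : 0 < ∫ y, (h y : ℝ) ∂lam := by
    have hp := hγpos
    rw [hγdef, withDensity_apply _ MeasurableSet.univ, Measure.restrict_univ,
      lintegral_coe_eq_integral _ hInt_h] at hp
    exact ENNReal.ofReal_pos.mp hp
  -- the key pointwise identity: d i y • (g-weighted w) = indicator
  have hpoint : ∀ (i : ι) (y : X), (q y = 0 → h y = 0) → ∀ (g : X → ℝ),
      (d i y : ℝ≥0) • ((w i y : ℝ) * g y)
        = Set.indicator (A i) (fun z => g z * (h z : ℝ)) y := by
    intro i y hy g
    by_cases hyA : y ∈ A i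
    · by_cases hqy : q y = 0
      · have hd0 : d i y = 0 := by simp [hd, Set.indicator_of_mem hyA, hqy]
        simp [hd0, Set.indicator_of_mem hyA, hy hqy]
      · have hdne : d i y ≠ 0 := by
          rw [hd, Set.indicator_of_mem hyA]
          exact div_ne_zero hqy (hωpos i).ne'
        have hmul : d i y * w i y = h y := by
          rw [hw, mul_comm, div_mul_cancel₀ _ hdne]
        rw [Set.indicator_of_mem hyA, NNReal.smul_def, smul_eq_mul, ← mul_assoc,
          ← NNReal.coe_mul, hmul, mul_comm]
    · have hd0 : d i y = 0 := by simp [hd, Set.indicator_of_notMem hyA]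
      simp [hd0, Set.indicator_of_notMem hyA]
  -- integrals over Q i
  have hQeq : ∀ (i : ι) (g : X → ℝ),
      (∫ y, (w i y : ℝ) * g y ∂(Q i))
        = ∫ y, Set.indicator (A i) (fun z => g z * (h z : ℝ)) y ∂lam := by
    intro i g
    rw [hQ i, integral_withDensity_eq_integral_smul (hdm i)]
    refine integral_congr_ae ?_
    filter_upwards [hzero] with y hy
    exact hpoint i y hy g
  -- summing the indicators
  have hsum_ind : ∀ (g : X → ℝ) (y : X),
      ∑ i, Set.indicator (A i) g y = g y := by
    intro g y
    obtain ⟨i0, hi0⟩ : ∃ i, y ∈ A i := by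
      have : y ∈ ⋃ i, A i := hcover ▸ Set.mem_univ y
      simpa [Set.mem_iUnion] using this
    rw [Finset.sum_eq_single i0]
    · simp [Set.indicator_of_mem hi0]
    · intro j _ hj
      exact Set.indicator_of_notMem
        (fun hyj => Set.disjoint_left.mp (hdisj hj) hyj hi0) _
    · simp
  have hsumgen : ∀ (g : X → ℝ), Integrable (fun y => g y * (h y : ℝ)) lam →
      ∑ i, ∫ y, (w i y : ℝ) * g y ∂(Q i) = ∫ y, g y * (h y : ℝ) ∂lam := by
    intro g hg
    simp_rw [hQeq]
    rw [← integral_finset_sum _ (fun i _ => hg.indicator (hA i))]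
    exact integral_congr_ae (ae_of_all _ fun y => hsum_ind _ y)
  have hsumF : ∑ i, ∫ y, (w i y : ℝ) * f y ∂(Q i) = ∫ y, f y * (h y : ℝ) ∂lam :=
    hsumgen f hIntfh
  have hsumW : ∑ i, ∫ y, (w i y : ℝ) * 1 ∂(Q i) = ∫ y, (h y : ℝ) ∂lam := by
    rw [hsumgen (fun _ => (1 : ℝ)) (by simpa using hInt_h)]
    simp
  -- strong law of large numbers for each stratum
  have key : ∀ (i : ι) (g : X → ℝ), Measurable g →
      Integrable (fun ωo => g (x i 0 ωo)) ℙ →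
      ∀ᵐ ωo ∂ℙ, Tendsto (fun N : ℕ => (N : ℝ)⁻¹ * ∑ n ∈ Finset.range N, g (x i n ωo))
        atTop (𝓝 (∫ y, g y ∂(Q i))) := by
    intro i g hg hgi
    have hident : ∀ n, IdentDistrib (fun ωo => g (x i n ωo)) (fun ωo => g (x i 0 ωo)) ℙ ℙ := by
      intro n
      exact IdentDistrib.comp
        ⟨(hxm i n).aemeasurable, (hxm i 0).aemeasurable, by rw [hlaw, hlaw]⟩ hg
    have hpind : Pairwise (Function.onFun (IndepFun · · ℙ) fun n ωo => g (x i n ωo)) := by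
      intro m n hmn
      exact (hindep.indepFun (show ((i, m) : ι × ℕ) ≠ (i, n) by simp [hmn])).comp hg hg
    have H := strong_law_ae_real _ hgi hpind hident
    have hmean : (∫ ωo, g (x i 0 ωo) ∂ℙ) = ∫ y, g y ∂(Q i) := by
      rw [← hlaw i 0, integral_map (hxm i 0).aemeasurable hg.aestronglyMeasurable]
    filter_upwards [H] with ωo hωo
    rw [← hmean]
    simpa [div_eq_inv_mul] using hωo
  -- integrability of the numerator summands
  have hintF : ∀ i, Integrable (fun ωo => (w i (x i 0 ωo) : ℝ) * f (x i 0 ωo)) ℙ := by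
    intro i
    have := (hint i).bdd_mul (hf.comp (hxm i 0)).aestronglyMeasurable
      (c := C) (ae_of_all _ fun ωo => by simpa using hC _)
    simpa [mul_comm] using this
  have hnum := fun i => key i (fun y => (w i y : ℝ) * f y)
    (((hwm i).coe_nnreal_real).mul hf) (hintF i)
  have hden := fun i => key i (fun y => (w i y : ℝ) * 1)
    (by simpa using (hwm i).coe_nnreal_real) (by simpa using hint i)
  have hWne : (∑ i, ∫ y, (w i y : ℝ) * 1 ∂(Q i)) ≠ 0 := by
    rw [hsumW]; exact hpos.ne'
  filter_upwards [ae_all_iff.mpr hnum, ae_all_iff.mpr hden] with ωo hn hd2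
  have hF : Tendsto (fun N : ℕ => ∑ i, (N : ℝ)⁻¹ *
      ∑ n ∈ Finset.range N, (w i (x i n ωo) : ℝ) * f (x i n ωo)) atTop
      (𝓝 (∑ i, ∫ y, (w i y : ℝ) * f y ∂(Q i))) :=
    tendsto_finset_sum _ fun i _ => hn i
  have hW : Tendsto (fun N : ℕ => ∑ i, (N : ℝ)⁻¹ *
      ∑ n ∈ Finset.range N, (w i (x i n ωo) : ℝ)) atTop
      (𝓝 (∑ i, ∫ y, (w i y : ℝ) * 1 ∂(Q i))) := by
    refine tendsto_finset_sum _ fun i _ => ?_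
    simpa using hd2 i
  rw [← hsumF, ← hsumW]
  exact hF.div hW hWne
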